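/- arXiv:2009.05735 — 2 statements merged into one kernel-verified Lean document; each statement's English description precedes it below -/
import Mathlib

section
/- (Propagation rules) Suppose there exists an [[n, k, d]]_q code with k ≥ 1 and d ≥ 2. Then: (i) there exists an [[n, k − 1, d]]_q code (subcode construction); (ii) there exists an [[n + 1, k, d]]_q code (lengthening); and (iii) if n ≥ 2, there exists an [[n − 1, k, d − 1]]_q code (puncturing). -/
set_option linter.unusedSectionVars false
set_option maxHeartbeats 1000000


open Matrix

open scoped BigOperators

/-- The error operator `X(a)`, acting on `ℂ^{q^n}` (with coordinates indexed by
`F^n`) by `X(a) e_v = e_{a+v}`. -/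
noncomputable def Xq (F : Type) [Field F] [Fintype F] [DecidableEq F]
    (n : ℕ) (a : Fin n → F) : Matrix (Fin n → F) (Fin n → F) ℂ :=
  Matrix.of fun w v => if w = a + v then 1 else 0

/-- The error operator `Z(b)`, acting on `ℂ^{q^n}` by
`Z(b) e_v = ω^{Tr(b·v)} e_v`, where `ω = exp(2πi/p)` and the absolute trace
`Tr(b·v) ∈ F_p` is lifted to `{0,…,p−1} ⊆ ℤ`. -/
noncomputable def Zq (p : ℕ) (F : Type) [Field F] [Fintype F] [DecidableEq F]
    [CharP F p] [Algebra (ZMod p) F]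
    (n : ℕ) (b : Fin n → F) : Matrix (Fin n → F) (Fin n → F) ℂ :=
  Matrix.of fun w v =>
    if w = v then
      Complex.exp (2 * Real.pi * Complex.I / p) ^
        (Algebra.trace (ZMod p) F (b ⬝ᵥ v)).val
    else 0

/-- The quantum weight of `(a|b)`: the number of indices `i` with `a_i ≠ 0` or
`b_i ≠ 0`. -/
noncomputable def wQq (F : Type) [Zero F] (n : ℕ) (a b : Fin n → F) : ℕ :=
  {i : Fin n | a i ≠ 0 ∨ b i ≠ 0}.ncard

/-- The Hamming weight of a vector in `F^n`. -/
noncomputable def wH (F : Type) [Zero F] (n : ℕ) (x : Fin n → F) : ℕ :=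
  {i : Fin n | x i ≠ 0}.ncard

/-- `Q` is an `[[n, k, d]]_q` code (`q = |F|`): a subspace of `ℂ^{q^n}` of
dimension `q^k` satisfying the Knill–Laflamme condition for `d`, i.e. for all
errors `X(a)Z(b)` of quantum weight at most `d − 1` and all orthogonal
`φ, ψ ∈ Q` one has `⟨φ, X(a)Z(b) ψ⟩ = 0`. -/
noncomputable def IsQECC (p : ℕ) (F : Type) [Field F] [Fintype F] [DecidableEq F]
    [CharP F p] [Algebra (ZMod p) F]
    (n k d : ℕ) (Q : Submodule ℂ ((Fin n → F) → ℂ)) : Prop :=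
  Module.finrank ℂ Q = Fintype.card F ^ k ∧
  ∀ a b : Fin n → F, wQq F n a b ≤ d - 1 →
    ∀ φ ∈ Q, ∀ ψ ∈ Q, star φ ⬝ᵥ ψ = 0 →
      star φ ⬝ᵥ (Xq F n a * Zq p F n b).mulVec ψ = 0

/-- There exists an `[[n, k, d]]_q` code. -/
noncomputable def ExistsQECC (p : ℕ) (F : Type) [Field F] [Fintype F]
    [DecidableEq F] [CharP F p] [Algebra (ZMod p) F] (n k d : ℕ) : Prop :=
  ∃ Q : Submodule ℂ ((Fin n → F) → ℂ), IsQECC p F n k d Q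

/-! ### Auxiliary lemmas -/

lemma trace_nondeg (p : ℕ) [Fact p.Prime] (F : Type) [Field F] [Fintype F] [CharP F p]
    [Algebra (ZMod p) F] {a : F} (ha : a ≠ 0) :
    ∃ b : F, Algebra.trace (ZMod p) F (a * b) ≠ 0 := by
  have h : ringChar F = p := ringChar.eq F p
  subst h
  exact FiniteField.trace_to_zmod_nondegenerate F ha

section chi
variable (p : ℕ) [Fact p.Prime] (F : Type) [Field F] [Fintype F] [DecidableEq F]
  [CharP F p] [Algebra (ZMod p) F]

lemma omega_pow : Complex.exp (2 * Real.pi * Complex.I / p) ^ p = 1 :=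
  (Complex.isPrimitiveRoot_exp p (Fact.out : p.Prime).ne_zero).pow_eq_one

/-- The canonical additive character of `F`. -/
noncomputable def chiF : AddChar F ℂ :=
  AddChar.compAddMonoidHom (AddChar.zmodChar p (omega_pow p))
    (Algebra.trace (ZMod p) F).toAddMonoidHom

lemma chiF_apply (x : F) :
    chiF p F x = Complex.exp (2 * Real.pi * Complex.I / p) ^
      (Algebra.trace (ZMod p) F x).val := by
  simp [chiF, AddChar.zmodChar_apply]

lemma chiF_prim : AddChar.IsPrimitive (chiF p F) := by
  intro a ha
  obtain ⟨b, hb⟩ := trace_nondeg p F ha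
  intro h
  have := DFunLike.congr_fun h b
  rw [AddChar.mulShift_apply, AddChar.one_apply, chiF_apply] at this
  have hlt : (Algebra.trace (ZMod p) F (a * b)).val < p := ZMod.val_lt _
  have hpos : 0 < (Algebra.trace (ZMod p) F (a * b)).val :=
    Nat.pos_of_ne_zero (fun h0 => hb ((ZMod.val_eq_zero _).mp h0))
  exact (Complex.isPrimitiveRoot_exp p (Fact.out : p.Prime).ne_zero).pow_ne_one_of_pos_of_lt
    hpos.ne' hlt this

lemma chiF_sum (t : F) :
    ∑ β : F, chiF p F (β * t) = if t = 0 then (Fintype.card F : ℂ) else 0 := by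
  rw [AddChar.sum_mulShift t (chiF_prim p F)]
  split_ifs <;> simp

end chi

section dot
variable {ι : Type*} [Fintype ι]

lemma gram_real (φ : ι → ℂ) :
    star φ ⬝ᵥ φ = ((∑ v, Complex.normSq (φ v) : ℝ) : ℂ) := by
  rw [dotProduct]
  push_cast
  refine Finset.sum_congr rfl fun v _ => ?_
  simp [Pi.star_apply, Complex.star_def, mul_comm, Complex.mul_conj]

lemma gram_eq_zero_iff (φ : ι → ℂ) : star φ ⬝ᵥ φ = 0 ↔ φ = 0 := by
  rw [gram_real]
  constructor
  · intro h
    have h' : (∑ v, Complex.normSq (φ v) : ℝ) = 0 := by exact_mod_cast h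
    funext v
    have := (Finset.sum_eq_zero_iff_of_nonneg
      (fun i _ => Complex.normSq_nonneg (φ i))).mp h' v (Finset.mem_univ v)
    simpa [Complex.normSq_eq_zero] using this
  · rintro rfl; simp

lemma dot_conj (φ ψ : ι → ℂ) : star ψ ⬝ᵥ φ = (starRingEnd ℂ) (star φ ⬝ᵥ ψ) := by
  rw [dotProduct, dotProduct, map_sum]
  refine Finset.sum_congr rfl fun v _ => ?_
  simp [Pi.star_apply, Complex.star_def, mul_comm]

lemma lam_exists (M : Matrix ι ι ℂ) (Q : Submodule ℂ (ι → ℂ))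
    (hQ : ∃ ψ0 ∈ Q, ψ0 ≠ (0 : ι → ℂ))
    (hKL : ∀ φ ∈ Q, ∀ ψ ∈ Q, star φ ⬝ᵥ ψ = 0 → star φ ⬝ᵥ M.mulVec ψ = 0) :
    ∃ lam : ℂ, ∀ φ ∈ Q, ∀ ψ ∈ Q,
      star φ ⬝ᵥ M.mulVec ψ = lam * (star φ ⬝ᵥ ψ) := by
  classical
  obtain ⟨φ0, hφ0Q, hφ0⟩ := hQ
  have ht0 : star φ0 ⬝ᵥ φ0 ≠ 0 := fun h => hφ0 ((gram_eq_zero_iff φ0).mp h)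
  set lam : ℂ := (star φ0 ⬝ᵥ M.mulVec φ0) / (star φ0 ⬝ᵥ φ0) with hlam
  refine ⟨lam, ?_⟩
  have key : ∀ φ ∈ Q, ∀ w ∈ Q, star φ ⬝ᵥ w = 0 →
      (star w ⬝ᵥ w) * (star φ ⬝ᵥ M.mulVec φ) =
      (star φ ⬝ᵥ φ) * (star w ⬝ᵥ M.mulVec w) := by
    intro φ hφ w hw hor
    have hor' : star w ⬝ᵥ φ = 0 := by rw [dot_conj, hor, map_zero]
    have hBφw : star φ ⬝ᵥ M.mulVec w = 0 := hKL φ hφ w hw hor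
    have hBwφ : star w ⬝ᵥ M.mulVec φ = 0 := hKL w hw φ hφ hor'
    set s : ℝ := ∑ v, Complex.normSq (w v) with hsdef
    set t : ℝ := ∑ v, Complex.normSq (φ v) with htdef
    have hs : star w ⬝ᵥ w = (s : ℂ) := gram_real w
    have htr : star φ ⬝ᵥ φ = (t : ℂ) := gram_real φ
    have hs0 : (0:ℝ) ≤ s := Finset.sum_nonneg fun _ _ => Complex.normSq_nonneg _
    have ht0' : (0:ℝ) ≤ t := Finset.sum_nonneg fun _ _ => Complex.normSq_nonneg _
    set σ : ℝ := Real.sqrt s with hσdef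
    set τ : ℝ := Real.sqrt t with hτdef
    have hσ : (σ:ℂ) * (σ:ℂ) = (s:ℂ) := by
      norm_cast; rw [Real.mul_self_sqrt hs0]
    have hτ : (τ:ℂ) * (τ:ℂ) = (t:ℂ) := by
      norm_cast; rw [Real.mul_self_sqrt ht0']
    set x : ι → ℂ := (σ:ℂ) • φ + (τ:ℂ) • w with hxdef
    set y : ι → ℂ := (σ:ℂ) • φ - (τ:ℂ) • w with hydef
    have hx : x ∈ Q := Q.add_mem (Q.smul_mem _ hφ) (Q.smul_mem _ hw)
    have hy : y ∈ Q := Q.sub_mem (Q.smul_mem _ hφ) (Q.smul_mem _ hw)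
    have hGxy : star x ⬝ᵥ y = 0 := by
      simp only [hxdef, hydef, star_add, star_smul, add_dotProduct, smul_dotProduct,
        dotProduct_sub, dotProduct_smul, smul_eq_mul, Complex.star_def,
        Complex.conj_ofReal]
      linear_combination (σ:ℂ)*(σ:ℂ)*htr - (τ:ℂ)*(τ:ℂ)*hs - (σ:ℂ)*(τ:ℂ)*hor
        + (τ:ℂ)*(σ:ℂ)*hor' + (t:ℂ)*hσ - (s:ℂ)*hτ
    have hBxy := hKL x hx y hy hGxy
    simp only [hxdef, hydef, star_add, star_smul, add_dotProduct, smul_dotProduct,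
      Matrix.mulVec_sub, Matrix.mulVec_smul, dotProduct_sub, dotProduct_smul,
      smul_eq_mul, Complex.star_def, Complex.conj_ofReal] at hBxy
    rw [hs, htr]
    linear_combination hBxy - (star φ ⬝ᵥ M.mulVec φ) * hσ
      + (star w ⬝ᵥ M.mulVec w) * hτ + (σ:ℂ)*(τ:ℂ)*hBφw - (τ:ℂ)*(σ:ℂ)*hBwφ
  intro φ hφ ψ hψ
  by_cases hGφφ : star φ ⬝ᵥ φ = 0
  · have h0 : φ = 0 := (gram_eq_zero_iff φ).mp hGφφ
    subst h0
    simp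
  · set c : ℂ := (star φ0 ⬝ᵥ φ) / (star φ0 ⬝ᵥ φ0) with hc
    set w : ι → ℂ := φ - c • φ0 with hwdef
    have hwQ : w ∈ Q := Q.sub_mem hφ (Q.smul_mem _ hφ0Q)
    have hGw : star φ0 ⬝ᵥ w = 0 := by
      rw [hwdef, dotProduct_sub, dotProduct_smul, hc, smul_eq_mul]
      field_simp
      simp
    have hGw' : star w ⬝ᵥ φ0 = 0 := by rw [dot_conj, hGw, map_zero]
    have hBφ0w : star φ0 ⬝ᵥ M.mulVec w = 0 := hKL φ0 hφ0Q w hwQ hGw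
    have hBwφ0 : star w ⬝ᵥ M.mulVec φ0 = 0 := hKL w hwQ φ0 hφ0Q hGw'
    have hkey := key φ0 hφ0Q w hwQ hGw
    have hBφ0φ0 : star φ0 ⬝ᵥ M.mulVec φ0 = lam * (star φ0 ⬝ᵥ φ0) := by
      rw [hlam]; field_simp
    have hBw : star w ⬝ᵥ M.mulVec w = lam * (star w ⬝ᵥ w) := by
      rw [hlam]
      field_simp
      linear_combination -hkey
    have hφeq : φ = w + c • φ0 := by rw [hwdef]; abel
    have hBφφ : star φ ⬝ᵥ M.mulVec φ = lam * (star φ ⬝ᵥ φ) := by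
      conv_lhs => rw [hφeq]
      conv_rhs => rw [hφeq]
      simp only [star_add, star_smul, add_dotProduct, smul_dotProduct, Matrix.mulVec_add,
        Matrix.mulVec_smul, dotProduct_add, dotProduct_smul, smul_eq_mul, Complex.star_def]
      rw [hBφ0w, hBwφ0, hGw, hGw', hBw, hBφ0φ0]
      ring
    set c' : ℂ := (star φ ⬝ᵥ ψ) / (star φ ⬝ᵥ φ) with hc'
    set w' : ι → ℂ := ψ - c' • φ with hw'def
    have hw'Q : w' ∈ Q := Q.sub_mem hψ (Q.smul_mem _ hφ)
    have hGw2 : star φ ⬝ᵥ w' = 0 := by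
      rw [hw'def, dotProduct_sub, dotProduct_smul, hc', smul_eq_mul]
      field_simp
      simp
    have hBφw' : star φ ⬝ᵥ M.mulVec w' = 0 := hKL φ hφ w' hw'Q hGw2
    have hψeq : ψ = w' + c' • φ := by rw [hw'def]; abel
    have hcc : c' * (star φ ⬝ᵥ φ) = star φ ⬝ᵥ ψ := by
      rw [hc']; field_simp
    conv_lhs => rw [hψeq]
    simp only [Matrix.mulVec_add, Matrix.mulVec_smul, dotProduct_add, dotProduct_smul,
      smul_eq_mul]
    rw [hBφw', hBφφ, zero_add]
    linear_combination lam * hcc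

end dot

section fin
variable {F : Type} [Field F] [Fintype F] [DecidableEq F]

lemma fin_cons_add_cons {m : ℕ} (x y : F) (u w : Fin m → F) :
    (Fin.cons x u : Fin (m+1) → F) + Fin.cons y w = Fin.cons (x + y) (u + w) := by
  funext i
  refine Fin.cases ?_ (fun j => ?_) i <;> simp

lemma dot_cons_cons {m : ℕ} (x y : F) (u w : Fin m → F) :
    (Fin.cons x u : Fin (m+1) → F) ⬝ᵥ Fin.cons y w = x * y + u ⬝ᵥ w := by
  rw [dotProduct, Fin.sum_univ_succ]
  simp [dotProduct]

lemma sum_pi_succ {M : Type*} [AddCommMonoid M] {m : ℕ} (f : (Fin (m+1) → F) → M) :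
    ∑ v : Fin (m+1) → F, f v = ∑ c : F, ∑ v' : Fin m → F, f (Fin.cons c v') := by
  rw [← Equiv.sum_comp (Fin.consEquiv fun _ : Fin (m+1) => F) f, Fintype.sum_prod_type]
  rfl

lemma wQq_zero (n : ℕ) : wQq F n 0 0 = 0 := by
  simp [wQq]

lemma wQq_tail_le {m : ℕ} (a b : Fin (m+1) → F) :
    wQq F m (Fin.tail a) (Fin.tail b) ≤ wQq F (m+1) a b := by
  rw [wQq, wQq]
  rw [← Set.ncard_image_of_injective _ (Fin.succ_injective m)]
  apply Set.ncard_le_ncard _ (Set.toFinite _)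
  rintro j ⟨i, hi, rfl⟩
  exact hi

lemma wQq_cons_le {m : ℕ} (x y : F) (a b : Fin m → F) :
    wQq F (m+1) (Fin.cons x a) (Fin.cons y b) ≤ wQq F m a b + 1 := by
  rw [wQq, wQq]
  have hsub : {i : Fin (m+1) | (Fin.cons x a : Fin (m+1) → F) i ≠ 0 ∨
        (Fin.cons y b : Fin (m+1) → F) i ≠ 0} ⊆
      insert (0 : Fin (m+1)) (Fin.succ '' {i : Fin m | a i ≠ 0 ∨ b i ≠ 0}) := by
    intro j hj
    rcases Fin.eq_zero_or_eq_succ j with rfl | ⟨i, rfl⟩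
    · exact Set.mem_insert _ _
    · refine Set.mem_insert_of_mem _ ⟨i, ?_, rfl⟩
      simpa using hj
  calc {i : Fin (m+1) | (Fin.cons x a : Fin (m+1) → F) i ≠ 0 ∨
        (Fin.cons y b : Fin (m+1) → F) i ≠ 0}.ncard
      ≤ (insert (0 : Fin (m+1)) (Fin.succ '' {i : Fin m | a i ≠ 0 ∨ b i ≠ 0})).ncard :=
        Set.ncard_le_ncard hsub (Set.toFinite _)
    _ ≤ (Fin.succ '' {i : Fin m | a i ≠ 0 ∨ b i ≠ 0}).ncard + 1 := Set.ncard_insert_le _ _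
    _ = {i : Fin m | a i ≠ 0 ∨ b i ≠ 0}.ncard + 1 := by
        rw [Set.ncard_image_of_injective _ (Fin.succ_injective m)]

end fin

section maps
variable (p : ℕ) [Fact p.Prime] (F : Type) [Field F] [Fintype F] [DecidableEq F]
  [CharP F p] [Algebra (ZMod p) F]

/-- The sesquilinear sum representing `⟨φ, X(a)Z(b) ψ⟩`. -/
noncomputable def Sfun (n : ℕ) (a b : Fin n → F) (φ ψ : (Fin n → F) → ℂ) : ℂ :=
  ∑ v : Fin n → F, (starRingEnd ℂ) (φ (a + v)) * (chiF p F (b ⬝ᵥ v) * ψ v)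

lemma XZ_apply (n : ℕ) (a b : Fin n → F) (w v : Fin n → F) :
    (Xq F n a * Zq p F n b) w v = if w = a + v then chiF p F (b ⬝ᵥ v) else 0 := by
  rw [Matrix.mul_apply]
  rw [Finset.sum_eq_single v]
  · simp [Xq, Zq, chiF_apply p F]
  · intro u _ hu
    simp [Xq, Zq, hu, Ne.symm hu]
  · intro hv
    exact absurd (Finset.mem_univ v) hv

lemma S_eq (n : ℕ) (a b : Fin n → F) (φ ψ : (Fin n → F) → ℂ) :
    star φ ⬝ᵥ (Xq F n a * Zq p F n b).mulVec ψ = Sfun p F n a b φ ψ := by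
  rw [dotProduct, Sfun]
  simp only [Matrix.mulVec, dotProduct, XZ_apply, Pi.star_apply, Complex.star_def,
    Finset.mul_sum]
  rw [Finset.sum_comm]
  refine Finset.sum_congr rfl fun v _ => ?_
  rw [Finset.sum_eq_single (a + v)]
  · simp [mul_assoc]
  · intro u _ hu
    simp [hu]
  · intro h
    exact absurd (Finset.mem_univ _) h

lemma Sfun_zero (n : ℕ) (φ ψ : (Fin n → F) → ℂ) :
    Sfun p F n 0 0 φ ψ = star φ ⬝ᵥ ψ := by
  rw [Sfun, dotProduct]
  refine Finset.sum_congr rfl fun v _ => ?_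
  simp [chiF_apply p F]

/-- The lengthening map. -/
noncomputable def Lmap (n : ℕ) : ((Fin n → F) → ℂ) →ₗ[ℂ] ((Fin (n+1) → F) → ℂ) where
  toFun ψ := fun w => if w 0 = 0 then ψ (Fin.tail w) else 0
  map_add' x y := by funext w; by_cases h : w 0 = 0 <;> simp [h]
  map_smul' c x := by funext w; by_cases h : w 0 = 0 <;> simp [h]

lemma Lmap_cons {n : ℕ} (ψ : (Fin n → F) → ℂ) (γ : F) (v' : Fin n → F) :
    Lmap F n ψ (Fin.cons γ v') = if γ = 0 then ψ v' else 0 := by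
  simp [Lmap]

lemma Lmap_inj (n : ℕ) : Function.Injective (Lmap F n) := by
  intro x y h
  funext v'
  have := congrFun h (Fin.cons 0 v')
  simpa [Lmap_cons] using this

lemma cons_decomp {n : ℕ} (a : Fin (n+1) → F) (γ : F) (v' : Fin n → F) :
    a + Fin.cons γ v' = Fin.cons (a 0 + γ) (Fin.tail a + v') := by
  conv_lhs => rw [← Fin.cons_self_tail a]
  rw [fin_cons_add_cons]

lemma dot_decomp {n : ℕ} (b : Fin (n+1) → F) (γ : F) (v' : Fin n → F) :
    b ⬝ᵥ Fin.cons γ v' = b 0 * γ + Fin.tail b ⬝ᵥ v' := by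
  conv_lhs => rw [← Fin.cons_self_tail b]
  rw [dot_cons_cons]

lemma G_L {n : ℕ} (φ ψ : (Fin n → F) → ℂ) :
    star (Lmap F n φ) ⬝ᵥ Lmap F n ψ = star φ ⬝ᵥ ψ := by
  rw [dotProduct, dotProduct, sum_pi_succ]
  rw [Finset.sum_eq_single (0 : F)]
  · refine Finset.sum_congr rfl fun v' _ => ?_
    simp [Lmap_cons]
  · intro γ _ hγ
    refine Finset.sum_eq_zero fun v' _ => ?_
    simp [Lmap_cons, hγ]
  · intro h
    exact absurd (Finset.mem_univ _) h

lemma S_L {n : ℕ} (a b : Fin (n+1) → F) (φ ψ : (Fin n → F) → ℂ) :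
    Sfun p F (n+1) a b (Lmap F n φ) (Lmap F n ψ) =
      if a 0 = 0 then chiF p F (b 0 * 0) *
        Sfun p F n (Fin.tail a) (Fin.tail b) φ ψ else 0 := by
  rw [Sfun, sum_pi_succ]
  rw [Finset.sum_eq_single (0 : F)]
  · by_cases h0 : a 0 = 0
    · rw [if_pos h0, Sfun, Finset.mul_sum]
      refine Finset.sum_congr rfl fun v' _ => ?_
      rw [cons_decomp, dot_decomp, Lmap_cons, Lmap_cons, if_pos rfl, if_pos (by rw [h0, add_zero]),
        AddChar.map_add_eq_mul]
      simp [h0]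
    · rw [if_neg h0]
      refine Finset.sum_eq_zero fun v' _ => ?_
      rw [cons_decomp, Lmap_cons, if_neg (by rwa [add_zero])]
      simp
  · intro γ _ hγ
    refine Finset.sum_eq_zero fun v' _ => ?_
    rw [Lmap_cons, if_neg hγ]
    simp
  · intro h
    exact absurd (Finset.mem_univ _) h

/-- The puncturing map: fix the first coordinate to `c`. -/
noncomputable def Tmap (m : ℕ) (c : F) : ((Fin (m+1) → F) → ℂ) →ₗ[ℂ] ((Fin m → F) → ℂ) where
  toFun ψ := fun v' => ψ (Fin.cons c v')
  map_add' _ _ := rfl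
  map_smul' _ _ := rfl

lemma T_sum {m : ℕ} (φ ψ : (Fin (m+1) → F) → ℂ) :
    ∑ c : F, star (Tmap F m c φ) ⬝ᵥ Tmap F m c ψ = star φ ⬝ᵥ ψ := by
  simp only [dotProduct]
  rw [sum_pi_succ (fun v => (star φ) v * ψ v)]
  rfl

lemma Tmaster {m : ℕ} (c : F) (a' b' : Fin m → F) (φ ψ : (Fin (m+1) → F) → ℂ) :
    (Fintype.card F : ℂ) * Sfun p F m a' b' (Tmap F m c φ) (Tmap F m c ψ) =
      ∑ β : F, chiF p F (-(β * c)) *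
        Sfun p F (m+1) (Fin.cons 0 a') (Fin.cons β b') φ ψ := by
  have step1 : ∀ β : F, chiF p F (-(β * c)) *
      Sfun p F (m+1) (Fin.cons 0 a') (Fin.cons β b') φ ψ
      = ∑ γ : F, ∑ v' : Fin m → F, chiF p F (β * (γ - c)) *
        ((starRingEnd ℂ) (φ (Fin.cons γ (a' + v'))) *
         (chiF p F (b' ⬝ᵥ v') * ψ (Fin.cons γ v'))) := by
    intro β
    rw [Sfun, sum_pi_succ, Finset.mul_sum]
    refine Finset.sum_congr rfl fun γ _ => ?_
    rw [Finset.mul_sum]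
    refine Finset.sum_congr rfl fun v' _ => ?_
    rw [fin_cons_add_cons, zero_add, dot_cons_cons, AddChar.map_add_eq_mul]
    have : chiF p F (-(β * c)) * chiF p F (β * γ) = chiF p F (β * (γ - c)) := by
      rw [← AddChar.map_add_eq_mul]
      congr 1
      ring
    calc chiF p F (-(β * c)) * ((starRingEnd ℂ) (φ (Fin.cons γ (a' + v'))) *
          (chiF p F (β * γ) * chiF p F (b' ⬝ᵥ v') * ψ (Fin.cons γ v')))
        = (chiF p F (-(β * c)) * chiF p F (β * γ)) *
          ((starRingEnd ℂ) (φ (Fin.cons γ (a' + v'))) *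
           (chiF p F (b' ⬝ᵥ v') * ψ (Fin.cons γ v'))) := by ring
      _ = _ := by rw [this]
  rw [Finset.sum_congr rfl fun β _ => step1 β]
  rw [Finset.sum_comm]
  have step2 : ∀ γ : F, ∑ β : F, ∑ v' : Fin m → F, chiF p F (β * (γ - c)) *
      ((starRingEnd ℂ) (φ (Fin.cons γ (a' + v'))) *
       (chiF p F (b' ⬝ᵥ v') * ψ (Fin.cons γ v')))
      = (if γ = c then (Fintype.card F : ℂ) else 0) *
        ∑ v' : Fin m → F, (starRingEnd ℂ) (φ (Fin.cons γ (a' + v'))) *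
         (chiF p F (b' ⬝ᵥ v') * ψ (Fin.cons γ v')) := by
    intro γ
    rw [Finset.sum_comm, Finset.mul_sum]
    refine Finset.sum_congr rfl fun v' _ => ?_
    rw [← Finset.sum_mul, chiF_sum p F (γ - c)]
    congr 1
    simp [sub_eq_zero]
  rw [Finset.sum_congr rfl fun γ _ => step2 γ]
  rw [Finset.sum_eq_single c]
  · rw [if_pos rfl, Sfun]
    rfl
  · intro γ _ hγ
    rw [if_neg hγ, zero_mul]
  · intro h
    exact absurd (Finset.mem_univ _) h

end maps

/-- propagation rules: from an `[[n, k, d]]_q` code with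
`k ≥ 1` and `d ≥ 2` one obtains (i) an `[[n, k − 1, d]]_q` code (subcode
construction), (ii) an `[[n + 1, k, d]]_q` code (lengthening), and (iii) if
`n ≥ 2`, an `[[n − 1, k, d − 1]]_q` code (puncturing). -/
theorem statement13 (p : ℕ) [Fact p.Prime] (F : Type) [Field F] [Fintype F]
    [DecidableEq F] [CharP F p] [Algebra (ZMod p) F]
    (n k d : ℕ) (hk : 1 ≤ k) (hd : 2 ≤ d)
    (h : ExistsQECC p F n k d) :
    ExistsQECC p F n (k - 1) d ∧
    ExistsQECC p F (n + 1) k d ∧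
    (2 ≤ n → ExistsQECC p F (n - 1) k (d - 1)) := by
  classical
  obtain ⟨Q, hdim, hKL⟩ := h
  have hcard : 0 < Fintype.card F := Fintype.card_pos
  have hQne : ∃ ψ0 ∈ Q, ψ0 ≠ (0 : (Fin n → F) → ℂ) := by
    by_contra hc
    push_neg at hc
    have hbot : Q = ⊥ := by
      rw [Submodule.eq_bot_iff]
      exact hc
    rw [hbot, finrank_bot] at hdim
    have : 0 < Fintype.card F ^ k := pow_pos hcard k
    omega
  refine ⟨?_, ?_, ?_⟩
  · -- (i) subcode
    have hr : Fintype.card F ^ (k - 1) ≤ Module.finrank ℂ Q := by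
      rw [hdim]
      exact Nat.pow_le_pow_right hcard (Nat.sub_le k 1)
    obtain ⟨f, hf⟩ := exists_linearIndependent_of_le_finrank hr
    refine ⟨(Submodule.span ℂ (Set.range f)).map Q.subtype, ?_, ?_⟩
    · rw [Submodule.finrank_map_subtype_eq, finrank_span_eq_card hf, Fintype.card_fin]
    · intro a b hw φ hφ ψ hψ horth
      exact hKL a b hw φ (Submodule.map_subtype_le Q _ hφ) ψ
        (Submodule.map_subtype_le Q _ hψ) horth
  · -- (ii) lengthening
    refine ⟨Q.map (Lmap F n), ?_, ?_⟩
    · rw [← LinearEquiv.finrank_eq (Submodule.equivMapOfInjective (Lmap F n) (Lmap_inj F n) Q)]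
      exact hdim
    · intro a b hw φ' hφ' ψ' hψ' horth
      obtain ⟨φ, hφQ, rfl⟩ := hφ'
      obtain ⟨ψ, hψQ, rfl⟩ := hψ'
      rw [G_L] at horth
      rw [S_eq, S_L]
      by_cases h0 : a 0 = 0
      · rw [if_pos h0]
        have hw' : wQq F n (Fin.tail a) (Fin.tail b) ≤ d - 1 :=
          le_trans (wQq_tail_le a b) hw
        have hz := hKL (Fin.tail a) (Fin.tail b) hw' φ hφQ ψ hψQ horth
        rw [S_eq] at hz
        rw [hz, mul_zero]
      · rw [if_neg h0]
  · -- (iii) puncturing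
    intro hn
    obtain ⟨m, rfl⟩ : ∃ m, n = m + 1 := ⟨n - 1, by omega⟩
    show ExistsQECC p F m k (d - 1)
    have hq0 : (Fintype.card F : ℂ) ≠ 0 := Nat.cast_ne_zero.mpr hcard.ne'
    have hlam : ∀ β : F, ∃ lam : ℂ, ∀ φ ∈ Q, ∀ ψ ∈ Q,
        star φ ⬝ᵥ (Xq F (m+1) (Fin.cons 0 0) *
          Zq p F (m+1) (Fin.cons β 0)).mulVec ψ = lam * (star φ ⬝ᵥ ψ) := by
      intro β
      apply lam_exists _ Q hQne
      intro φ hφ ψ hψ hor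
      refine hKL _ _ ?_ φ hφ ψ hψ hor
      calc wQq F (m+1) (Fin.cons 0 0) (Fin.cons β 0) ≤ wQq F m 0 0 + 1 :=
            wQq_cons_le 0 β 0 0
        _ ≤ d - 1 := by rw [wQq_zero]; omega
    choose lam hlamspec using hlam
    set ν : F → ℂ := fun c =>
      (∑ β : F, chiF p F (-(β * c)) * lam β) / (Fintype.card F : ℂ) with hν
    have hGT : ∀ c : F, ∀ φ ∈ Q, ∀ ψ ∈ Q,
        star (Tmap F m c φ) ⬝ᵥ Tmap F m c ψ = ν c * (star φ ⬝ᵥ ψ) := by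
      intro c φ hφ ψ hψ
      have hm := Tmaster p F c 0 0 φ ψ
      rw [Sfun_zero] at hm
      have h2 : (Fintype.card F : ℂ) * (star (Tmap F m c φ) ⬝ᵥ Tmap F m c ψ) =
          (∑ β : F, chiF p F (-(β * c)) * lam β) * (star φ ⬝ᵥ ψ) := by
        rw [hm, Finset.sum_mul]
        refine Finset.sum_congr rfl fun β _ => ?_
        have hS : Sfun p F (m+1) (Fin.cons 0 0) (Fin.cons β 0) φ ψ =
            lam β * (star φ ⬝ᵥ ψ) := by
          rw [← S_eq]
          exact hlamspec β φ hφ ψ hψ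
        rw [hS]
        ring
      simp only [hν]
      rw [div_mul_eq_mul_div, eq_div_iff hq0]
      linear_combination h2
    obtain ⟨ψ0, hψ0Q, hψ00⟩ := hQne
    have hGψ0 : star ψ0 ⬝ᵥ ψ0 ≠ 0 := fun hh => hψ00 ((gram_eq_zero_iff ψ0).mp hh)
    have hsum : (∑ c : F, ν c) * (star ψ0 ⬝ᵥ ψ0) = 1 * (star ψ0 ⬝ᵥ ψ0) := by
      rw [one_mul, Finset.sum_mul,
        Finset.sum_congr rfl fun c _ => (hGT c ψ0 hψ0Q ψ0 hψ0Q).symm]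
      exact T_sum F ψ0 ψ0
    have hνsum : ∑ c : F, ν c = 1 := mul_right_cancel₀ hGψ0 hsum
    have hc0 : ∃ c0 : F, ν c0 ≠ 0 := by
      by_contra hcon
      push_neg at hcon
      rw [Finset.sum_eq_zero (fun c _ => hcon c)] at hνsum
      exact zero_ne_one hνsum
    obtain ⟨c0, hν0⟩ := hc0
    refine ⟨Q.map (Tmap F m c0), ?_, ?_⟩
    · have hzero : ∀ z ∈ Q, Tmap F m c0 z = 0 → z = 0 := by
        intro z hz hz0
        have hgt := hGT c0 z hz z hz
        rw [hz0] at hgt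
        simp only [star_zero, zero_dotProduct] at hgt
        have hGz : star z ⬝ᵥ z = 0 :=
          ((mul_eq_zero.mp hgt.symm).resolve_left hν0)
        exact (gram_eq_zero_iff z).mp hGz
      have hinj : Function.Injective ((Tmap F m c0).comp Q.subtype) := by
        intro x y hxy
        have hT : Tmap F m c0 ((x : (Fin (m+1) → F) → ℂ) - y) = 0 := by
          rw [map_sub, sub_eq_zero]
          exact hxy
        have := hzero _ (Q.sub_mem x.2 y.2) hT
        exact Subtype.ext (sub_eq_zero.mp this)
      have hrange : LinearMap.range ((Tmap F m c0).comp Q.subtype) =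
          Q.map (Tmap F m c0) := by
        rw [LinearMap.range_comp, Submodule.range_subtype]
      rw [← hrange, LinearMap.finrank_range_of_inj hinj]
      exact hdim
    · intro a' b' hw φ' hφ' ψ' hψ' horth
      obtain ⟨φ, hφQ, rfl⟩ := hφ'
      obtain ⟨ψ, hψQ, rfl⟩ := hψ'
      have hGφψ : star φ ⬝ᵥ ψ = 0 := by
        have hgt := hGT c0 φ hφQ ψ hψQ
        rw [horth] at hgt
        exact (mul_eq_zero.mp hgt.symm).resolve_left hν0
      rw [S_eq]
      have hm := Tmaster p F c0 a' b' φ ψ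
      have hz : ∀ β : F, Sfun p F (m+1) (Fin.cons 0 a') (Fin.cons β b') φ ψ = 0 := by
        intro β
        rw [← S_eq]
        refine hKL _ _ ?_ φ hφQ ψ hψQ hGφψ
        calc wQq F (m+1) (Fin.cons 0 a') (Fin.cons β b') ≤ wQq F m a' b' + 1 :=
              wQq_cons_le 0 β a' b'
          _ ≤ d - 1 := by omega
      rw [Finset.sum_eq_zero (fun β _ => by rw [hz β, mul_zero])] at hm
      exact (mul_eq_zero.mp hm).resolve_left hq0
end

section
/- (CSS-like construction for asymmetric quantum codes) Let C_1 and C_2 be linear codes in F^n of dimensions k_1 and k_2 respectively, with k_1 + k_2 ≥ n and C_1^⊥ ⊆ C_2 (Euclidean duals). Set d_z = max{ wH(C_2 \ C_1^⊥), wH(C_1 \ C_2^⊥) } and d_x = min{ wH(C_2 \ C_1^⊥), wH(C_1 \ C_2^⊥) }. Then there exists an [[n, k_1 + k_2 − n, d_z, d_x]]_q asymmetric quantum code. -/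
open Matrix

open scoped BigOperators

/-- `Q` is an `[[n, k, d_z, d_x]]_q` asymmetric quantum code: a subspace of
`ℂ^{q^n}` of dimension `q^k` such that for all `a, b ∈ F^n` with
`wH(a) ≤ d_x − 1` and `wH(b) ≤ d_z − 1` and all orthogonal `φ, ψ ∈ Q` one has
`⟨φ, X(a)Z(b) ψ⟩ = 0`. -/
noncomputable def IsAQECC (p : ℕ) (F : Type) [Field F] [Fintype F]
    [DecidableEq F] [CharP F p] [Algebra (ZMod p) F]
    (n k dz dx : ℕ) (Q : Submodule ℂ ((Fin n → F) → ℂ)) : Prop :=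
  Module.finrank ℂ Q = Fintype.card F ^ k ∧
  ∀ a b : Fin n → F, wH F n a ≤ dx - 1 → wH F n b ≤ dz - 1 →
    ∀ φ ∈ Q, ∀ ψ ∈ Q, star φ ⬝ᵥ ψ = 0 →
      star φ ⬝ᵥ (Xq F n a * Zq p F n b).mulVec ψ = 0

/-- The Euclidean dual of a linear code `C ⊆ F^n`. -/
def dualE (F : Type) [Field F] (n : ℕ) (C : Submodule F (Fin n → F)) :
    Set (Fin n → F) :=
  {x | ∀ c ∈ C, x ⬝ᵥ c = 0}

set_option linter.unusedSectionVars false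
set_option maxHeartbeats 1000000
set_option synthInstance.maxHeartbeats 400000

section dual
variable (F : Type) [Field F] (n : ℕ)

/-- The dot-product bilinear form on `F^n`. -/
noncomputable def dotForm : LinearMap.BilinForm F (Fin n → F) :=
  LinearMap.mk₂ F (· ⬝ᵥ ·) add_dotProduct smul_dotProduct dotProduct_add dotProduct_smul

lemma dotForm_apply (x y : Fin n → F) : dotForm F n x y = x ⬝ᵥ y := rfl

lemma dotForm_refl : (dotForm F n).IsRefl := by
  intro x y h
  rw [dotForm_apply] at h ⊢
  rwa [dotProduct_comm]

lemma dotForm_nondeg : (dotForm F n).Nondegenerate := by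
  refine (LinearMap.IsRefl.nondegenerate_iff_separatingLeft (dotForm_refl F n)).mpr ?_
  intro x hx
  funext i
  have := hx (Pi.single i 1)
  rwa [dotForm_apply, dotProduct_single, mul_one] at this

/-- The Euclidean dual of a code, as a submodule. -/
noncomputable def dualS (C : Submodule F (Fin n → F)) : Submodule F (Fin n → F) :=
  (dotForm F n).orthogonal C

lemma mem_dualS {C : Submodule F (Fin n → F)} {x : Fin n → F} :
    x ∈ dualS F n C ↔ ∀ c ∈ C, c ⬝ᵥ x = 0 :=
  LinearMap.BilinForm.mem_orthogonal_iff

lemma mem_dualS' {C : Submodule F (Fin n → F)} {x : Fin n → F} :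
    x ∈ dualS F n C ↔ ∀ c ∈ C, x ⬝ᵥ c = 0 := by
  rw [mem_dualS]
  constructor <;> intro h c hc <;> rw [dotProduct_comm] <;> exact h c hc

lemma dualE_eq (C : Submodule F (Fin n → F)) : dualE F n C = ↑(dualS F n C) := by
  ext x
  simp only [dualE, Set.mem_setOf_eq, SetLike.mem_coe, mem_dualS']

lemma finrank_dualS (C : Submodule F (Fin n → F)) :
    Module.finrank F (dualS F n C) = n - Module.finrank F C := by
  rw [dualS, LinearMap.BilinForm.finrank_orthogonal (dotForm_nondeg F n),
    Module.finrank_pi, Fintype.card_fin]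

lemma dualS_dualS (C : Submodule F (Fin n → F)) : dualS F n (dualS F n C) = C :=
  LinearMap.BilinForm.orthogonal_orthogonal (dotForm_nondeg F n) (dotForm_refl F n) C

lemma dualS_antitone {C C' : Submodule F (Fin n → F)} (h : C ≤ C') :
    dualS F n C' ≤ dualS F n C := fun x hx => by
  rw [mem_dualS] at hx ⊢
  exact fun c hc => hx c (h hc)

end dual

section omegaLemmas
variable (p : ℕ) [Fact p.Prime]

/-- `ω = exp(2πi/p)`. -/
noncomputable def om (p : ℕ) : ℂ := Complex.exp (2 * Real.pi * Complex.I / p)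

lemma om_pow_p : om p ^ p = 1 := by
  have hp : (p : ℂ) ≠ 0 := Nat.cast_ne_zero.mpr (Fact.out (p := p.Prime)).ne_zero
  rw [om, ← Complex.exp_nat_mul]
  rw [mul_div_cancel₀ _ hp, Complex.exp_two_pi_mul_I]

lemma om_pow_val_add (s t : ZMod p) :
    om p ^ (s + t).val = om p ^ s.val * om p ^ t.val := by
  rw [ZMod.val_add, ← pow_eq_pow_mod _ (om_pow_p p), pow_add]

lemma om_pow_val_ne_one {t : ZMod p} (ht : t ≠ 0) : om p ^ t.val ≠ 1 := by
  have hp : p ≠ 0 := (Fact.out (p := p.Prime)).ne_zero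
  have hprim := Complex.isPrimitiveRoot_exp p hp
  exact hprim.pow_ne_one_of_pos_of_lt
    (fun h => ht ((ZMod.val_eq_zero t).mp h)) (ZMod.val_lt t)

end omegaLemmas

section charsum
variable (p : ℕ) [Fact p.Prime] (F : Type) [Field F] [Fintype F] [DecidableEq F]
  [CharP F p] [Algebra (ZMod p) F] (n : ℕ)

lemma trace_nondeg_s17 {x : F} (hx : x ≠ 0) :
    ∃ y : F, Algebra.trace (ZMod p) F (x * y) ≠ 0 := by
  have h : p = ringChar F := (ringChar.eq F p).symm
  subst h
  exact FiniteField.trace_to_zmod_nondegenerate F hx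

lemma char_sum (D : Submodule F (Fin n → F)) [Fintype ↥D] {b : Fin n → F}
    (hb : b ∉ dualS F n D) :
    ∑ d : ↥D, om p ^ (Algebra.trace (ZMod p) F (b ⬝ᵥ (d : Fin n → F))).val = 0 := by
  haveI : NeZero p := ⟨(Fact.out (p := p.Prime)).ne_zero⟩
  -- the additive character
  let f : ↥D →+ ZMod p := AddMonoidHom.mk'
    (fun d => Algebra.trace (ZMod p) F (b ⬝ᵥ (d : Fin n → F)))
    (fun d e => by
      push_cast
      rw [dotProduct_add, map_add])
  let χ : AddChar ↥D ℂ := (AddChar.zmodChar p (om_pow_p p)).compAddMonoidHom f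
  have hχapp : ∀ d : ↥D,
      χ d = om p ^ (Algebra.trace (ZMod p) F (b ⬝ᵥ (d : Fin n → F))).val := fun d => rfl
  -- nontriviality
  rw [mem_dualS] at hb
  push_neg at hb
  obtain ⟨c, hcD, hcb⟩ := hb
  have hbc : b ⬝ᵥ c ≠ 0 := by rwa [dotProduct_comm]
  obtain ⟨y, hy⟩ := trace_nondeg_s17 p F hbc
  have hmem : y • c ∈ D := D.smul_mem y hcD
  have hne : χ ≠ 1 := by
    rw [AddChar.ne_one_iff]
    refine ⟨⟨y • c, hmem⟩, ?_⟩
    rw [hχapp]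
    apply om_pow_val_ne_one
    have : b ⬝ᵥ (y • c) = b ⬝ᵥ c * y := by
      rw [dotProduct_smul, smul_eq_mul, mul_comm]
    rwa [this]
  have hsum := AddChar.sum_eq_zero_of_ne_one hne
  calc ∑ d : ↥D, om p ^ (Algebra.trace (ZMod p) F (b ⬝ᵥ (d : Fin n → F))).val
      = ∑ d : ↥D, χ d := by
        refine Finset.sum_congr rfl fun d _ => (hχapp d).symm
    _ = 0 := hsum

end charsum

section coset
variable (p : ℕ) [Fact p.Prime] (F : Type) [Field F] [Fintype F] [DecidableEq F]
  [CharP F p] [Algebra (ZMod p) F] (n : ℕ)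

open scoped Classical in
/-- The indicator function of the coset `x + D`. -/
noncomputable def cosetInd (D : Submodule F (Fin n → F)) (x : Fin n → F) :
    (Fin n → F) → ℂ :=
  fun v => if v - x ∈ D then 1 else 0

lemma star_cosetInd (D : Submodule F (Fin n → F)) (x : Fin n → F) :
    star (cosetInd F n D x) = cosetInd F n D x := by
  funext v
  by_cases h : v - x ∈ D <;> simp [cosetInd, h]

lemma cosetInd_self (D : Submodule F (Fin n → F)) (x : Fin n → F) :
    cosetInd F n D x x = 1 := by
  simp [cosetInd]

lemma XZ_mulVec (a b : Fin n → F) (ψ : (Fin n → F) → ℂ) (w : Fin n → F) :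
    (Xq F n a * Zq p F n b).mulVec ψ w
      = om p ^ (Algebra.trace (ZMod p) F (b ⬝ᵥ (w - a))).val * ψ (w - a) := by
  rw [← mulVec_mulVec]
  have hz : ∀ u : Fin n → F, (Zq p F n b).mulVec ψ u
      = om p ^ (Algebra.trace (ZMod p) F (b ⬝ᵥ u)).val * ψ u := by
    intro u
    show (fun v => (Zq p F n b) u v) ⬝ᵥ ψ = _
    rw [dotProduct]
    rw [Finset.sum_eq_single u]
    · simp [Zq, om]
    · intro v _ hvu
      simp [Zq, Ne.symm hvu]
    · intro h; exact absurd (Finset.mem_univ u) h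
  show (fun v => (Xq F n a) w v) ⬝ᵥ ((Zq p F n b).mulVec ψ) = _
  rw [dotProduct, Finset.sum_eq_single (w - a)]
  · rw [hz]
    simp [Xq]
  · intro v _ hv
    have : w ≠ a + v := by
      intro hc
      exact hv (by rw [hc]; abel)
    simp [Xq, this]
  · intro h; exact absurd (Finset.mem_univ _) h

lemma key1 {D A : Submodule F (Fin n → F)} (hDA : D ≤ A)
    {a b x y : Fin n → F} (ha : a ∈ D) (hb : b ∈ dualS F n A) (hx : x ∈ A) (hy : y ∈ A) :
    star (cosetInd F n D x) ⬝ᵥ (Xq F n a * Zq p F n b).mulVec (cosetInd F n D y)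
      = star (cosetInd F n D x) ⬝ᵥ cosetInd F n D y := by
  rw [star_cosetInd, dotProduct, dotProduct]
  refine Finset.sum_congr rfl fun w _ => ?_
  rw [XZ_mulVec]
  by_cases h2 : w - a - y ∈ D
  · have hwy : w - y ∈ D := by
      have he : (w - a - y) + a = w - y := by abel
      rw [← he]; exact D.add_mem h2 ha
    have hTr : b ⬝ᵥ (w - a) = 0 := by
      have hwa : w - a ∈ A := by
        have he : (w - a - y) + y = w - a := by abel
        rw [← he]; exact A.add_mem (hDA h2) hy
      rw [dotProduct_comm]
      exact (mem_dualS F n).mp hb _ hwa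
    have hcy : cosetInd F n D y (w - a) = 1 := by
      simp only [cosetInd]; rw [if_pos h2]
    have hcy' : cosetInd F n D y w = 1 := by
      simp only [cosetInd]; rw [if_pos hwy]
    rw [hcy, hcy', hTr]
    simp
  · have hwy : w - y ∉ D := by
      intro hc
      apply h2
      have he : (w - y) - a = w - a - y := by abel
      rw [← he]; exact D.sub_mem hc ha
    have hcy : cosetInd F n D y (w - a) = 0 := by
      simp only [cosetInd]; rw [if_neg h2]
    have hcy' : cosetInd F n D y w = 0 := by
      simp only [cosetInd]; rw [if_neg hwy]
    rw [hcy, hcy']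
    simp

lemma key0a {D A : Submodule F (Fin n → F)} (hDA : D ≤ A)
    {a b x y : Fin n → F} (ha : a ∉ A) (hx : x ∈ A) (hy : y ∈ A) :
    star (cosetInd F n D x) ⬝ᵥ (Xq F n a * Zq p F n b).mulVec (cosetInd F n D y) = 0 := by
  rw [star_cosetInd, dotProduct]
  apply Finset.sum_eq_zero
  intro w _
  rw [XZ_mulVec]
  by_cases h1 : w - x ∈ D
  · by_cases h2 : w - a - y ∈ D
    · exfalso
      apply ha
      have he : (w - x) - (w - a - y) + x - y = a := by abel
      rw [← he]
      exact A.sub_mem (A.add_mem (A.sub_mem (hDA h1) (hDA h2)) hx) hy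
    · have : cosetInd F n D y (w - a) = 0 := by
        simp only [cosetInd]; rw [if_neg h2]
      rw [this]; simp
  · have : cosetInd F n D x w = 0 := by
      simp only [cosetInd]; rw [if_neg h1]
    rw [this]; simp

lemma key0b (D : Submodule F (Fin n → F)) [Fintype ↥D]
    {a b x y : Fin n → F} (hb : b ∉ dualS F n D) :
    star (cosetInd F n D x) ⬝ᵥ (Xq F n a * Zq p F n b).mulVec (cosetInd F n D y) = 0 := by
  classical
  rw [star_cosetInd, dotProduct]
  by_cases hxy : a + y - x ∈ D
  · have step1 : ∀ w : Fin n → F,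
        cosetInd F n D x w * ((Xq F n a * Zq p F n b).mulVec (cosetInd F n D y) w)
          = if w - (a + y) ∈ D
            then om p ^ (Algebra.trace (ZMod p) F (b ⬝ᵥ (w - a))).val else 0 := by
      intro w
      rw [XZ_mulVec]
      by_cases h2 : w - a - y ∈ D
      · have hx' : w - x ∈ D := by
          have he : (w - a - y) + (a + y - x) = w - x := by abel
          rw [← he]; exact D.add_mem h2 hxy
        have hw : w - (a + y) ∈ D := by
          have he : w - a - y = w - (a + y) := by abel
          rwa [he] at h2
        have e1 : cosetInd F n D x w = 1 := by simp only [cosetInd]; rw [if_pos hx']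
        have e2 : cosetInd F n D y (w - a) = 1 := by simp only [cosetInd]; rw [if_pos h2]
        rw [e1, e2, if_pos hw]; ring
      · have hw : w - (a + y) ∉ D := by
          have he : w - a - y = w - (a + y) := by abel
          rwa [he] at h2
        have e2 : cosetInd F n D y (w - a) = 0 := by simp only [cosetInd]; rw [if_neg h2]
        rw [e2, if_neg hw]; ring
    rw [Finset.sum_congr rfl fun w _ => step1 w]
    -- reindex by translation
    rw [← Equiv.sum_comp (Equiv.addRight (a + y))]
    have step2 : ∀ u : Fin n → F,
        (if (Equiv.addRight (a + y)) u - (a + y) ∈ D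
          then om p ^ (Algebra.trace (ZMod p) F (b ⬝ᵥ ((Equiv.addRight (a + y)) u - a))).val else 0)
        = if u ∈ D then om p ^ (Algebra.trace (ZMod p) F (b ⬝ᵥ (u + y))).val else 0 := by
      intro u
      have h1 : (Equiv.addRight (a + y)) u - (a + y) = u := by
        show u + (a + y) - (a + y) = u
        abel
      have h2 : (Equiv.addRight (a + y)) u - a = u + y := by
        show u + (a + y) - a = u + y
        abel
      rw [h1, h2]
    rw [Finset.sum_congr rfl fun u _ => step2 u]
    have step3 : (∑ u : Fin n → F,
        if u ∈ D then om p ^ (Algebra.trace (ZMod p) F (b ⬝ᵥ (u + y))).val else 0)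
        = ∑ d : ↥D, om p ^ (Algebra.trace (ZMod p) F (b ⬝ᵥ ((d : Fin n → F) + y))).val := by
      rw [← Finset.sum_filter]
      exact Finset.sum_subtype _ (fun u => by simp) _
    have step4 : ∀ d : ↥D,
        om p ^ (Algebra.trace (ZMod p) F (b ⬝ᵥ ((d : Fin n → F) + y))).val
          = om p ^ (Algebra.trace (ZMod p) F (b ⬝ᵥ (d : Fin n → F))).val
            * om p ^ (Algebra.trace (ZMod p) F (b ⬝ᵥ y)).val := by
      intro d
      rw [dotProduct_add, map_add, om_pow_val_add]
    rw [step3, Finset.sum_congr rfl fun d _ => step4 d, ← Finset.sum_mul,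
      char_sum p F n D hb, zero_mul]
  · apply Finset.sum_eq_zero
    intro w _
    rw [XZ_mulVec]
    by_cases h1 : w - x ∈ D
    · by_cases h2 : w - a - y ∈ D
      · exfalso
        apply hxy
        have he : (w - x) - (w - a - y) = a + y - x := by abel
        rw [← he]; exact D.sub_mem h1 h2
      · have : cosetInd F n D y (w - a) = 0 := by
          simp only [cosetInd]; rw [if_neg h2]
        rw [this]; simp
    · have : cosetInd F n D x w = 0 := by
        simp only [cosetInd]; rw [if_neg h1]
      rw [this]; simp

end coset

section bilin
variable (F : Type) [Field F] [Fintype F] [DecidableEq F] (n : ℕ)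

lemma span_bilin {ι : Type} (g : ι → ((Fin n → F) → ℂ))
    (M : Matrix (Fin n → F) (Fin n → F) ℂ) (c : ℂ)
    (h : ∀ t s, star (g t) ⬝ᵥ M.mulVec (g s) = c * (star (g t) ⬝ᵥ g s)) :
    ∀ φ ∈ Submodule.span ℂ (Set.range g), ∀ ψ ∈ Submodule.span ℂ (Set.range g),
      star φ ⬝ᵥ M.mulVec ψ = c * (star φ ⬝ᵥ ψ) := by
  have h1 : ∀ φ, (∀ s, star φ ⬝ᵥ M.mulVec (g s) = c * (star φ ⬝ᵥ g s)) →
      ∀ ψ ∈ Submodule.span ℂ (Set.range g), star φ ⬝ᵥ M.mulVec ψ = c * (star φ ⬝ᵥ ψ) := by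
    intro φ hφ ψ hψ
    induction hψ using Submodule.span_induction with
    | mem x hx => obtain ⟨s, rfl⟩ := hx; exact hφ s
    | zero => simp
    | add u v hu hv ihu ihv =>
        rw [mulVec_add, dotProduct_add, dotProduct_add, ihu, ihv]; ring
    | smul r u hu ihu =>
        rw [mulVec_smul, dotProduct_smul, dotProduct_smul, ihu, smul_eq_mul, smul_eq_mul]
        ring
  intro φ hφ ψ hψ
  induction hφ using Submodule.span_induction with
  | mem x hx => obtain ⟨t, rfl⟩ := hx; exact h1 (g t) (h t) ψ hψ
  | zero => simp
  | add u v hu hv ihu ihv =>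
      rw [star_add, add_dotProduct, add_dotProduct, ihu, ihv]
      ring
  | smul r u hu ihu =>
      rw [star_smul, smul_dotProduct, smul_dotProduct, ihu, smul_eq_mul, smul_eq_mul]
      ring

end bilin

section css
variable (p : ℕ) [Fact p.Prime] (F : Type) [Field F] [Fintype F] [DecidableEq F]
  [CharP F p] [Algebra (ZMod p) F] (n : ℕ)

lemma wH_zero_iff {v : Fin n → F} (hv : wH F n v = 0) : v = 0 := by
  rw [wH] at hv
  have := (Set.ncard_eq_zero (Set.toFinite _)).mp hv
  funext i
  by_contra h
  exact absurd this (Set.nonempty_iff_ne_empty.mp ⟨i, h⟩)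

lemma css (A B : Submodule F (Fin n → F)) (hAB : dualS F n B ≤ A) (dz dx : ℕ)
    (hdz : dz ≤ sInf (wH F n '' ((B : Set (Fin n → F)) \ dualE F n A)))
    (hdx : dx ≤ sInf (wH F n '' ((A : Set (Fin n → F)) \ dualE F n B))) :
    ∃ Q : Submodule ℂ ((Fin n → F) → ℂ),
      IsAQECC p F n (Module.finrank F A + Module.finrank F B - n) dz dx Q := by
  classical
  set D := dualS F n B with hDdef
  let D' : Submodule F ↥A := D.comap A.subtype
  let T := ↥A ⧸ D'
  haveI : Fintype T := Fintype.ofFinite T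
  haveI : Fintype ↥D := Fintype.ofFinite ↥D
  let g : T → ((Fin n → F) → ℂ) := fun t => cosetInd F n D ↑(Quotient.out t)
  have hmkout : ∀ t : T, Submodule.Quotient.mk (Quotient.out t) = t := fun t =>
    Quotient.out_eq' t
  have hmemD : ∀ u v : ↥A, (Submodule.Quotient.mk u : T) = Submodule.Quotient.mk v →
      ((u : Fin n → F) - (v : Fin n → F)) ∈ D := by
    intro u v huv
    rw [Submodule.Quotient.eq] at huv
    exact huv
  have hsame : ∀ t : T, ∀ u : ↥A, (Submodule.Quotient.mk u : T) = t →
      g t = cosetInd F n D ↑u := by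
    intro t u hu
    have h1 : ((Quotient.out t : ↥A) : Fin n → F) - ↑u ∈ D := by
      apply hmemD
      rw [hmkout, hu]
    funext w
    simp only [g, cosetInd]
    by_cases h : w - ↑(Quotient.out t) ∈ D
    · rw [if_pos h, if_pos]
      have he : (w - ↑(Quotient.out t)) + (↑(Quotient.out t) - ↑u) = w - ↑u := by abel
      rw [← he]; exact D.add_mem h h1
    · rw [if_neg h, if_neg]
      intro hc
      apply h
      have he : (w - ↑u) - (↑(Quotient.out t) - ↑u) = w - ↑(Quotient.out t) := by abel
      rw [← he]; exact D.sub_mem hc h1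
  -- independence
  have hindep : LinearIndependent ℂ g := by
    rw [Fintype.linearIndependent_iff]
    intro cf hcf t0
    have hev := congrFun hcf ↑(Quotient.out t0)
    simp only [Finset.sum_apply, Pi.smul_apply, Pi.zero_apply, smul_eq_mul] at hev
    rw [Finset.sum_eq_single t0] at hev
    · rw [show g t0 ↑(Quotient.out t0) = 1 from cosetInd_self F n D _] at hev
      rwa [mul_one] at hev
    · intro t _ hts
      have hnm : ¬((↑(Quotient.out t0) : Fin n → F) - ↑(Quotient.out t) ∈ D) := by
        intro hc
        apply hts
        rw [← hmkout t, ← hmkout t0]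
        have hc' : ((Quotient.out t : ↥A) : Fin n → F) - ↑(Quotient.out t0) ∈ D := by
          have := D.neg_mem hc
          simpa [neg_sub] using this
        exact (Submodule.Quotient.eq D').mpr (by simpa [D', Submodule.mem_comap] using hc')
      simp only [g, cosetInd]
      rw [if_neg hnm, mul_zero]
    · intro h; exact absurd (Finset.mem_univ t0) h
  refine ⟨Submodule.span ℂ (Set.range g), ?_, ?_⟩
  · rw [finrank_span_eq_card hindep]
    have hq : Fintype.card T = Fintype.card F ^ (Module.finrank F T) := Module.card_eq_pow_finrank
    have hT : Module.finrank F T + Module.finrank F D' = Module.finrank F ↥A :=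
      Submodule.finrank_quotient_add_finrank D'
    have hD'2 : Module.finrank F D' = Module.finrank F ↥D :=
      (Submodule.comapSubtypeEquivOfLe (show D ≤ A from hAB)).finrank_eq
    have hDrank : Module.finrank F ↥D = n - Module.finrank F ↥B := finrank_dualS F n B
    have hBn : Module.finrank F ↥B ≤ n := by
      have := Submodule.finrank_le B
      rwa [Module.finrank_pi, Fintype.card_fin] at this
    have hAn : Module.finrank F ↥A ≤ n := by
      have := Submodule.finrank_le A
      rwa [Module.finrank_pi, Fintype.card_fin] at this
    rw [hq]
    congr 1
    omega
  · intro a b ha hb φ hφ ψ hψ horth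
    -- weight consequences
    have hwpos : ∀ v : Fin n → F, v ≠ 0 → 1 ≤ wH F n v := fun v hv =>
      Nat.one_le_iff_ne_zero.mpr (fun h0 => hv (wH_zero_iff F n h0))
    have hbB : b ∈ B → b ∈ dualS F n A := by
      intro hbB'
      by_contra hc
      have hb0 : b ≠ 0 := by rintro rfl; exact hc ((dualS F n A).zero_mem)
      have hle : sInf (wH F n '' ((B : Set (Fin n → F)) \ dualE F n A)) ≤ wH F n b := by
        apply Nat.sInf_le
        exact ⟨b, ⟨hbB', by rw [dualE_eq]; exact hc⟩, rfl⟩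
      have h1 := hwpos b hb0
      omega
    have haA : a ∈ A → a ∈ D := by
      intro haA'
      by_contra hc
      have ha0 : a ≠ 0 := by rintro rfl; exact hc (D.zero_mem)
      have hle : sInf (wH F n '' ((A : Set (Fin n → F)) \ dualE F n B)) ≤ wH F n a := by
        apply Nat.sInf_le
        refine ⟨a, ⟨haA', ?_⟩, rfl⟩
        rw [dualE_eq]
        exact hc
      have h1 := hwpos a ha0
      omega
    by_cases hbB' : b ∈ B
    · by_cases haA' : a ∈ A
      · -- acts as identity on the code
        have hkey : ∀ t s : T, star (g t) ⬝ᵥ (Xq F n a * Zq p F n b).mulVec (g s)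
            = 1 * (star (g t) ⬝ᵥ g s) := by
          intro t s
          rw [one_mul]
          exact key1 p F n hAB (haA haA') (hbB hbB') (Quotient.out t).2 (Quotient.out s).2
        have := span_bilin F n g _ 1 hkey φ hφ ψ hψ
        rw [this, horth, mul_zero]
      · have hkey : ∀ t s : T, star (g t) ⬝ᵥ (Xq F n a * Zq p F n b).mulVec (g s)
            = 0 * (star (g t) ⬝ᵥ g s) := by
          intro t s
          rw [zero_mul]
          exact key0a p F n hAB haA' (Quotient.out t).2 (Quotient.out s).2
        have := span_bilin F n g _ 0 hkey φ hφ ψ hψ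
        rw [this, zero_mul]
    · have hbD : b ∉ dualS F n D := by
        rw [hDdef, dualS_dualS]
        exact hbB'
      have hkey : ∀ t s : T, star (g t) ⬝ᵥ (Xq F n a * Zq p F n b).mulVec (g s)
          = 0 * (star (g t) ⬝ᵥ g s) := by
        intro t s
        rw [zero_mul]
        exact key0b p F n D hbD
      have := span_bilin F n g _ 0 hkey φ hφ ψ hψ
      rw [this, zero_mul]

end css
/-- CSS-like construction for asymmetric quantum codes: if
`C_1, C_2 ⊆ F^n` are linear codes of dimensions `k_1, k_2` with
`k_1 + k_2 ≥ n` and `C_1^⊥ ⊆ C_2`, and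
`d_z = max{wH(C_2 \ C_1^⊥), wH(C_1 \ C_2^⊥)}`,
`d_x = min{wH(C_2 \ C_1^⊥), wH(C_1 \ C_2^⊥)}`, then there exists an
`[[n, k_1 + k_2 − n, d_z, d_x]]_q` asymmetric quantum code. -/
theorem statement17 (p : ℕ) [Fact p.Prime] (F : Type) [Field F] [Fintype F]
    [DecidableEq F] [CharP F p] [Algebra (ZMod p) F]
    (n k1 k2 : ℕ) (hn : n ≤ k1 + k2)
    (C1 C2 : Submodule F (Fin n → F))
    (hk1 : Module.finrank F C1 = k1) (hk2 : Module.finrank F C2 = k2)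
    (hnest : dualE F n C1 ⊆ (C2 : Set (Fin n → F))) :
    ∃ Q : Submodule ℂ ((Fin n → F) → ℂ),
      IsAQECC p F n (k1 + k2 - n)
        (max (sInf (wH F n '' ((C2 : Set (Fin n → F)) \ dualE F n C1)))
             (sInf (wH F n '' ((C1 : Set (Fin n → F)) \ dualE F n C2))))
        (min (sInf (wH F n '' ((C2 : Set (Fin n → F)) \ dualE F n C1)))
             (sInf (wH F n '' ((C1 : Set (Fin n → F)) \ dualE F n C2)))) Q := by
  have hd12 : dualS F n C1 ≤ C2 := by
    intro x hx
    exact hnest (by rw [dualE_eq]; exact hx)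
  have hd21 : dualS F n C2 ≤ C1 := by
    have := dualS_antitone F n hd12
    rwa [dualS_dualS] at this
  rcases le_total (sInf (wH F n '' ((C1 : Set (Fin n → F)) \ dualE F n C2)))
      (sInf (wH F n '' ((C2 : Set (Fin n → F)) \ dualE F n C1))) with h | h
  · rw [max_eq_left h, min_eq_right h]
    obtain ⟨Q, hQ⟩ := css p F n C1 C2 hd21 _ _ le_rfl le_rfl
    rw [hk1, hk2] at hQ
    exact ⟨Q, hQ⟩
  · rw [max_eq_right h, min_eq_left h]
    obtain ⟨Q, hQ⟩ := css p F n C2 C1 hd12 _ _ le_rfl le_rfl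
    rw [hk1, hk2, Nat.add_comm k2 k1] at hQ
    exact ⟨Q, hQ⟩
end
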